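/- For N = 1 and S = (-2, 1, 2, 3, …), the 1-Schur function is f_S¹ = h₂/h₀, where h_k := h^{1,1}_k: i.e., the determinant of the top-left m×m block of M_S divided by h₀^m equals h₂/h₀ for all m ≥ 1 (assuming h₀ ≠ 0). -/
import Mathlib


/-- For `N = 1` and `S = (-2, 1, 2, 3, …)`, the 1-Schur function equals `h₂/h₀`:
the determinant of the top-left `m×m` block of `M_S` (whose `(j,i)` entry is
`h_{j - s_i}`, with `h_k = 0` for `k < 0`) divided by `h₀^m` equals `h₂/h₀` for
every `m ≥ 1` (assuming `h₀ ≠ 0`). -/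
theorem oneSchur_example (h : ℕ → ℂ) (hh0 : h 0 ≠ 0)
    (hh : ℤ → ℂ) (hhdef : ∀ k : ℤ, hh k = if 0 ≤ k then h k.toNat else 0)
    (s : ℕ → ℤ) (hs0 : s 0 = -2) (hs : ∀ i : ℕ, 1 ≤ i → s i = i)
    (m : ℕ) (hm : 1 ≤ m)
    (A : Matrix (Fin m) (Fin m) ℂ)
    (hA : ∀ j i : Fin m, A j i = hh ((j : ℤ) - s i)) :
    Matrix.det A / (h 0) ^ m = h 2 / h 0 := by
  obtain ⟨n, rfl⟩ : ∃ n, m = n + 1 := ⟨m - 1, (Nat.succ_pred_eq_of_pos hm).symm⟩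
  have hdet : Matrix.det A = h 2 * (h 0) ^ n := by
    rw [Matrix.det_succ_row_zero]
    have hzero : ∀ i : Fin (n + 1), i ≠ 0 → A 0 i = 0 := by
      intro i hi
      rw [hA, hs i (Nat.one_le_iff_ne_zero.2 (fun hc => hi (Fin.ext hc))), hhdef]
      have : ((0 : Fin (n+1)) : ℤ) - (i : ℕ) < 0 := by
        have : 0 < (i : ℕ) := Nat.pos_of_ne_zero (fun hc => hi (Fin.ext hc))
        simp only [Fin.val_zero, Int.ofNat_zero, zero_sub, neg_neg]
        omega
      rw [if_neg (by omega)]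
    rw [Finset.sum_eq_single 0]
    · have hA00 : A 0 0 = h 2 := by
        rw [hA]
        simp only [Fin.val_zero, Int.ofNat_zero]
        rw [hs0, hhdef]
        norm_num
        rfl
      rw [hA00]
      have hsub : Matrix.det (A.submatrix Fin.succ (Fin.succAbove 0)) = (h 0) ^ n := by
        have hB : ∀ j i : Fin n,
            (A.submatrix Fin.succ (Fin.succAbove 0)) j i = hh ((j : ℤ) - (i : ℤ)) := by
          intro j i
          simp only [Matrix.submatrix_apply, Fin.succAbove_zero]
          rw [hA, hs (i.succ : Fin (n+1)) (by simp [Fin.val_succ])]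
          simp [Fin.val_succ]
        rw [Matrix.det_of_lowerTriangular _ ?_]
        · rw [Finset.prod_congr rfl (fun i _ => ?_), Finset.prod_const,
            Finset.card_univ, Fintype.card_fin]
          rw [hB, sub_self, hhdef]
          norm_num
        · intro i j hij
          rw [hB, hhdef, if_neg]
          simp only [OrderDual.toDual_lt_toDual] at hij
          have : (j : ℕ) > (i : ℕ) := hij
          omega
      rw [hsub]
      simp
    · intro i _ hi
      rw [hzero i hi]
      ring
    · intro hc
      exact absurd (Finset.mem_univ 0) hc
  rw [hdet]
  field_simp
  ring
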